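/- Let T be a curvature-like tensor on a real vector space V (dim V ≥ 3) equipped with a nondegenerate symmetric bilinear form g of indefinite signature. If T(x,y,y,x)=0 for every pair of vectors x, y spanning a weakly degenerate 2-plane, then T = c·π₁ for some real constant c, where π₁(z,u,v,w) = g(z,w)g(u,v) − g(z,v)g(u,w). -/

import Mathlib

set_option maxHeartbeats 1000000

private lemma aux_quad {a b c τ₁ τ₂ τ₃ : ℝ}
    (h : ∀ t : ℝ, t ≠ τ₁ → t ≠ τ₂ → t ≠ τ₃ → a + b * t + c * t ^ 2 = 0) :
    a = 0 ∧ b = 0 ∧ c = 0 := by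
  obtain ⟨M, hM⟩ : ∃ X : ℝ, X = |τ₁| + |τ₂| + |τ₃| + 1 := ⟨_, rfl⟩
  have habs : ∀ s : ℝ, M ≤ s → (s ≠ τ₁ ∧ s ≠ τ₂ ∧ s ≠ τ₃) := by
    intro s hs
    have h1 := le_abs_self τ₁; have h2 := le_abs_self τ₂; have h3 := le_abs_self τ₃
    have a1 := abs_nonneg τ₁; have a2 := abs_nonneg τ₂; have a3 := abs_nonneg τ₃
    refine ⟨?_, ?_, ?_⟩ <;> (intro he; rw [he] at hs; rw [hM] at hs; linarith)
  obtain ⟨e1a, e1b, e1c⟩ := habs M le_rfl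
  obtain ⟨e2a, e2b, e2c⟩ := habs (M + 1) (by linarith)
  obtain ⟨e3a, e3b, e3c⟩ := habs (M + 2) (by linarith)
  have e1 := h M e1a e1b e1c
  have e2 := h (M + 1) e2a e2b e2c
  have e3 := h (M + 2) e3a e3b e3c
  have hc : c = 0 := by linear_combination (e1 + e3 - 2 * e2) / 2
  have hb : b = 0 := by linear_combination e2 - e1 - (2 * M + 1) * hc
  exact ⟨by linear_combination e1 - M * hb - M ^ 2 * hc, hb, hc⟩

private lemma aux_poly4 {a0 a1 a2 a3 a4 : ℝ}
    (h : ∀ t : ℝ, a0 + a1 * t + a2 * t ^ 2 + a3 * t ^ 3 + a4 * t ^ 4 = 0) :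
    a1 = 0 ∧ a2 = 0 ∧ a3 = 0 := by
  have h0 := h 0; have h1 := h 1; have h2 := h (-1); have h3 := h 2; have h4 := h (-2)
  norm_num at h0 h1 h2 h3 h4
  refine ⟨by linarith, by linarith, by linarith⟩

private lemma aux_poly6 {a0 a1 a2 a3 a4 a5 a6 : ℝ}
    (h : ∀ t : ℝ, a0 + a1 * t + a2 * t ^ 2 + a3 * t ^ 3 + a4 * t ^ 4 + a5 * t ^ 5 + a6 * t ^ 6 = 0) :
    a1 = 0 := by
  have h0 := h 0; have h1 := h 1; have h2 := h (-1); have h3 := h 2; have h4 := h (-2)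
  have h5 := h 3; have h6 := h (-3)
  norm_num at h0 h1 h2 h3 h4 h5 h6
  linarith



/-- Lemma A: a curvature-like tensor vanishing on all weakly degenerate
2-planes of a nondegenerate indefinite space of dimension ≥ 3 is a constant multiple
of π₁. -/
theorem curvature_like_vanishing_on_weakly_degenerate_planes
    {V : Type*} [AddCommGroup V] [Module ℝ V] [FiniteDimensional ℝ V]
    (hdim : 3 ≤ Module.finrank ℝ V)
    (g : LinearMap.BilinForm ℝ V)
    (hsymm : ∀ x y : V, g x y = g y x)
    (hnondeg : ∀ v : V, (∀ w : V, g v w = 0) → v = 0)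
    (hindef : (∃ v : V, g v v > 0) ∧ (∃ w : V, g w w < 0))
    (T : V →ₗ[ℝ] V →ₗ[ℝ] V →ₗ[ℝ] V →ₗ[ℝ] ℝ)
    (hT1 : ∀ x y z u : V, T x y z u = -T y x z u)
    (hT2 : ∀ x y z u : V, T x y z u + T y z x u + T z x y u = 0)
    (hT3 : ∀ x y z u : V, T x y z u = -T x y u z)
    (hvan : ∀ x y : V, LinearIndependent ℝ ![x, y] →
      LinearMap.rank (g.compl₁₂ (Submodule.span ℝ {x, y}).subtype
        (Submodule.span ℝ {x, y}).subtype) = 1 →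
      T x y y x = 0) :
    ∃ c : ℝ, ∀ z u v w : V,
      T z u v w = c * (g z w * g u v - g z v * g u w) := by
  classical
  -- basic consequences
  have tz1 : ∀ x z u : V, T x x z u = 0 := fun x z u => by linarith [hT1 x x z u]
  have tz2 : ∀ x y z : V, T x y z z = 0 := fun x y z => by linarith [hT3 x y z z]
  have tpair : ∀ x y z u : V, T x y z u = T z u x y := by
    intro x y z u
    have b1 := hT2 x y z u; have b2 := hT2 y z u x; have b3 := hT2 z u x y
    have b4 := hT2 u x y z
    have c1 := hT1 z x y u; have c2 := hT3 y z u x; have c3 := hT3 z u y x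
    have c4 := hT1 u y z x; have c5 := hT3 y u z x; have c6 := hT1 u x z y
    have c7 := hT3 x u z y; have c8 := hT3 x z u y; have c9 := hT1 u x y z
    have c10 := hT3 x y u z
    linarith
  -- swap middle pair inside an outer (n, n) frame
  have tmid : ∀ n x y : V, T n y x n = T n x y n := by
    intro n x y
    linarith [tpair n y x n, hT1 x n n y, hT3 n x n y]
  -- hyperbolic pair
  obtain ⟨⟨vp, hvp⟩, ⟨vm, hvm⟩⟩ := hindef
  have hsq : Real.sqrt (g vp vp) ^ 2 = g vp vp := Real.sq_sqrt (le_of_lt hvp)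
  have hsp : (0:ℝ) < Real.sqrt (g vp vp) := Real.sqrt_pos.mpr hvp
  obtain ⟨e, he⟩ : ∃ X : V, X = (Real.sqrt (g vp vp))⁻¹ • vp := ⟨_, rfl⟩
  have hee : g e e = 1 := by
    rw [he]; simp only [map_smul, LinearMap.smul_apply, smul_eq_mul]
    field_simp
    linarith [hsq]
  obtain ⟨w', hw'⟩ : ∃ X : V, X = vm - (g e vm) • e := ⟨_, rfl⟩
  have hw'w' : g w' w' < 0 := by
    have : g w' w' = g vm vm - (g e vm) ^ 2 := by
      rw [hw']
      simp only [map_sub, map_smul, LinearMap.sub_apply, LinearMap.smul_apply, smul_eq_mul]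
      rw [hee, hsymm vm e]; ring
    rw [this]; nlinarith [sq_nonneg (g e vm)]
  have hew' : g e w' = 0 := by
    rw [hw']
    simp only [map_sub, map_smul, LinearMap.sub_apply, LinearMap.smul_apply, smul_eq_mul]
    rw [hee]; ring
  have hsq2 : Real.sqrt (-g w' w') ^ 2 = -g w' w' := Real.sq_sqrt (by linarith)
  have hsp2 : (0:ℝ) < Real.sqrt (-g w' w') := Real.sqrt_pos.mpr (by linarith)
  obtain ⟨f, hf⟩ : ∃ X : V, X = (Real.sqrt (-g w' w'))⁻¹ • w' := ⟨_, rfl⟩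
  have hff : g f f = -1 := by
    rw [hf]; simp only [map_smul, LinearMap.smul_apply, smul_eq_mul]
    have hne : Real.sqrt (-g w' w') ≠ 0 := ne_of_gt hsp2
    field_simp
    linear_combination hsq2
  have hef : g e f = 0 := by
    rw [hf]; simp only [map_smul, LinearMap.smul_apply, smul_eq_mul]
    rw [hew']; ring
  have hfe : g f e = 0 := by rw [hsymm]; exact hef
  obtain ⟨n₀, hn₀def⟩ : ∃ X : V, X = e + f := ⟨_, rfl⟩
  obtain ⟨m₀, hm₀def⟩ : ∃ X : V, X = (1/2 : ℝ) • (e - f) := ⟨_, rfl⟩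
  have hn₀n₀ : g n₀ n₀ = 0 := by
    rw [hn₀def]
    simp only [map_add, LinearMap.add_apply]
    rw [hee, hff, hef, hfe]; ring
  have hm₀m₀ : g m₀ m₀ = 0 := by
    rw [hm₀def]
    simp only [map_smul, map_sub, LinearMap.smul_apply, LinearMap.sub_apply, smul_eq_mul]
    rw [hee, hff, hef, hfe]; ring
  have hn₀m₀ : g n₀ m₀ = 1 := by
    rw [hn₀def, hm₀def]
    simp only [map_smul, map_add, map_sub, LinearMap.smul_apply, LinearMap.add_apply,
      LinearMap.sub_apply, smul_eq_mul]
    rw [hee, hff, hef, hfe]; ring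
  have hm₀n₀ : g m₀ n₀ = 1 := by rw [hsymm]; exact hn₀m₀
  have hn₀ne : n₀ ≠ 0 := by
    intro h; rw [h] at hn₀m₀; simp at hn₀m₀
  have hm₀ne : m₀ ≠ 0 := by
    intro h; rw [h] at hm₀n₀; simp at hm₀n₀
  -- existence of non-orthogonal vector
  have hexv : ∀ u : V, u ≠ 0 → ∃ v : V, g u v ≠ 0 := by
    intro u hu; by_contra h; push_neg at h; exact hu (hnondeg u h)
  -- make a null partner
  have mkpair : ∀ n : V, g n n = 0 → n ≠ 0 → ∃ m : V, g m m = 0 ∧ g n m = 1 := by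
    intro n hn hn0
    obtain ⟨v, hv⟩ := hexv n hn0
    refine ⟨(g n v)⁻¹ • v - (g v v / (2 * (g n v) ^ 2)) • n, ?_, ?_⟩
    · simp only [map_sub, map_smul, LinearMap.sub_apply, LinearMap.smul_apply, smul_eq_mul]
      rw [hn, hsymm v n]
      field_simp
      ring
    · simp only [map_sub, map_smul, LinearMap.sub_apply, LinearMap.smul_apply, smul_eq_mul]
      rw [hn]
      field_simp
      ring
  -- nonzero vector orthogonal to two given vectors
  have Wnonzero : ∀ n m : V, ∃ w : V, w ≠ 0 ∧ g n w = 0 ∧ g m w = 0 := by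
    intro n m
    have hker : ∀ u : V, Module.finrank ℝ V ≤ Module.finrank ℝ (LinearMap.ker (g u)) + 1 := by
      intro u
      have h1 := LinearMap.finrank_range_add_finrank_ker (g u)
      have h2 : Module.finrank ℝ (LinearMap.range (g u)) ≤ 1 := by
        have := Submodule.finrank_le (LinearMap.range (g u))
        simpa using this
      omega
    have hK : 1 ≤ Module.finrank ℝ ((LinearMap.ker (g n) ⊓ LinearMap.ker (g m)) : Submodule ℝ V) := by
      have hs := Submodule.finrank_sup_add_finrank_inf_eq (LinearMap.ker (g n)) (LinearMap.ker (g m))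
      have h3 : Module.finrank ℝ ((LinearMap.ker (g n) ⊔ LinearMap.ker (g m)) : Submodule ℝ V)
          ≤ Module.finrank ℝ V := Submodule.finrank_le _
      have h4 := hker n; have h5 := hker m
      omega
    have hbot : (LinearMap.ker (g n) ⊓ LinearMap.ker (g m) : Submodule ℝ V) ≠ ⊥ := by
      intro h; rw [h] at hK; simp at hK
    obtain ⟨w, hwK, hw0⟩ := Submodule.exists_mem_ne_zero_of_ne_bot hbot
    obtain ⟨hw1, hw2⟩ := Submodule.mem_inf.mp hwK
    exact ⟨w, hw0, LinearMap.mem_ker.mp hw1, LinearMap.mem_ker.mp hw2⟩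
  -- z orthogonal to n and m with g z z ≠ 0
  have Wex : ∀ n m : V, g n n = 0 → g m m = 0 → g n m = 1 →
      ∃ z : V, g n z = 0 ∧ g m z = 0 ∧ g z z ≠ 0 := by
    intro n m hn hm hnm
    have hmn : g m n = 1 := by rw [hsymm]; exact hnm
    obtain ⟨w, hw0, hwn, hwm⟩ := Wnonzero n m
    obtain ⟨v, hv⟩ := hexv w hw0
    obtain ⟨v₀, hv₀⟩ : ∃ X : V, X = v - (g m v) • n - (g n v) • m := ⟨_, rfl⟩
    have h1 : g n v₀ = 0 := by
      rw [hv₀]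
      simp only [map_sub, map_smul, LinearMap.sub_apply, LinearMap.smul_apply, smul_eq_mul]
      rw [hn, hnm]; ring
    have h2 : g m v₀ = 0 := by
      rw [hv₀]
      simp only [map_sub, map_smul, LinearMap.sub_apply, LinearMap.smul_apply, smul_eq_mul]
      rw [hm, hmn]; ring
    have h3 : g w v₀ ≠ 0 := by
      have hwn' : g w n = 0 := by rw [hsymm]; exact hwn
      have hwm' : g w m = 0 := by rw [hsymm]; exact hwm
      have : g w v₀ = g w v := by
        rw [hv₀]
        simp only [map_sub, map_smul, LinearMap.sub_apply, LinearMap.smul_apply, smul_eq_mul]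
        rw [hwn', hwm']; ring
      rw [this]; exact hv
    by_cases hww : g w w ≠ 0
    · exact ⟨w, hwn, hwm, hww⟩
    by_cases hvv : g v₀ v₀ ≠ 0
    · exact ⟨v₀, h1, h2, hvv⟩
    push_neg at hww hvv
    refine ⟨w + v₀, ?_, ?_, ?_⟩
    · rw [map_add]; rw [hwn, h1]; ring
    · rw [map_add]; rw [hwm, h2]; ring
    · have hv₀w : g v₀ w = g w v₀ := hsymm v₀ w
      have : g (w + v₀) (w + v₀) = 2 * g w v₀ := by
        simp only [map_add, LinearMap.add_apply]
        rw [hww, hvv, hv₀w]; ring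
      rw [this]
      intro hc; apply h3; linarith
  have zperp : ∀ n : V, g n n = 0 → n ≠ 0 → ∃ z : V, g n z = 0 ∧ g z z ≠ 0 := by
    intro n hn hn0
    obtain ⟨m, hm, hnm⟩ := mkpair n hn hn0
    obtain ⟨z, hz1, _, hz3⟩ := Wex n m hn hm hnm
    exact ⟨z, hz1, hz3⟩
  -- the rank-one lemma
  have rankone : ∀ x n : V, g n n = 0 → g n x = 0 → g x x ≠ 0 →
      LinearMap.rank (g.compl₁₂ (Submodule.span ℝ {x, n}).subtype
        (Submodule.span ℝ {x, n}).subtype) = 1 := by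
    intro x n hn hnx hxx
    set p := Submodule.span ℝ ({x, n} : Set V) with hp
    have hxp : x ∈ p := Submodule.subset_span (Set.mem_insert _ _)
    have hnp : n ∈ p := Submodule.subset_span (Set.mem_insert_of_mem _ rfl)
    set B := g.compl₁₂ p.subtype p.subtype with hB
    have hxn : g x n = 0 := by rw [hsymm]; exact hnx
    have happ : ∀ (a : V) (ha : a ∈ p) (b : V) (hb : b ∈ p),
        B ⟨a, ha⟩ ⟨b, hb⟩ = g a b := fun a ha b hb => rfl
    have hBn : B ⟨n, hnp⟩ = 0 := by
      ext ⟨u, hu⟩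
      obtain ⟨s, t, rfl⟩ := Submodule.mem_span_pair.mp hu
      have : B ⟨n, hnp⟩ ⟨s • x + t • n, hu⟩ = g n (s • x + t • n) := rfl
      rw [LinearMap.zero_apply, this]
      simp only [map_add, map_smul, smul_eq_mul]
      rw [hn, hnx]; ring
    have hBx : B ⟨x, hxp⟩ ≠ 0 := by
      intro h
      apply hxx
      have : B ⟨x, hxp⟩ ⟨x, hxp⟩ = g x x := rfl
      rw [h, LinearMap.zero_apply] at this
      exact this.symm
    have hrange : LinearMap.range B = Submodule.span ℝ {B ⟨x, hxp⟩} := by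
      apply le_antisymm
      · rintro φ ⟨v, rfl⟩
        obtain ⟨s, t, hst⟩ := Submodule.mem_span_pair.mp v.2
        have hv : v = s • (⟨x, hxp⟩ : p) + t • (⟨n, hnp⟩ : p) := by
          apply Subtype.ext
          rw [← hst]
          rfl
        rw [hv, map_add, map_smul, map_smul, hBn, smul_zero, add_zero]
        exact Submodule.smul_mem _ _ (Submodule.mem_span_singleton_self _)
      · rw [Submodule.span_le, Set.singleton_subset_iff]
        exact ⟨_, rfl⟩
    have hfr : Module.finrank ℝ (Submodule.span ℝ {B ⟨x, hxp⟩}) = 1 :=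
      finrank_span_singleton hBx
    unfold LinearMap.rank
    rw [hrange]
    have hfr2 := Module.finrank_eq_rank ℝ (↥(Submodule.span ℝ {B ⟨x, hxp⟩}))
    rw [← hfr2, hfr, Nat.cast_one]
  -- Part 2 : T n x x n = 0 for null n and x ⊥ n
  have part2 : ∀ n x : V, g n n = 0 → n ≠ 0 → g n x = 0 → T n x x n = 0 := by
    intro n x hn hn0 hnx
    by_cases hxsp : ∃ a : ℝ, x = a • n
    · obtain ⟨a, rfl⟩ := hxsp
      have hxa : T n (a • n) (a • n) n = a * (a * T n n n n) := by
        simp only [map_smul, LinearMap.smul_apply, smul_eq_mul]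
      rw [hxa, tz1]; ring
    · push_neg at hxsp
      have key : ∀ x' : V, g n x' = 0 → g x' x' ≠ 0 → (∀ a : ℝ, a • n ≠ x') →
          T n x' x' n = 0 := by
        intro x' h1 h2 h3
        have hli : LinearIndependent ℝ ![x', n] := by
          rw [linearIndependent_fin2]
          refine ⟨by simpa using hn0, fun a => by simpa using h3 a⟩
        have hv := hvan x' n hli (rankone x' n hn h1 h2)
        linarith [hT1 n x' x' n, hT3 x' n x' n, hv]
      by_cases hxx : g x x = 0
      case neg => exact key x hnx hxx (fun a => (hxsp a).symm)
      case pos =>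
        obtain ⟨z, hz1, hz2⟩ := zperp n hn hn0
        have fin : ∀ σ : ℝ, (∀ t : ℝ, t ≠ σ → ∀ a : ℝ, a • n ≠ x + t • z) →
            T n x x n = 0 := by
          intro σ hspan
          have hq : ∀ t : ℝ, t ≠ 0 → t ≠ -((g x z + g z x) / g z z) → t ≠ σ →
              T n x x n + (T n x z n + T n z x n) * t + T n z z n * t ^ 2 = 0 := by
            intro t ht0 htτ htσ
            have hperp : g n (x + t • z) = 0 := by
              rw [map_add, map_smul, smul_eq_mul, hnx, hz1]; ring
            have hgxt : g (x + t • z) (x + t • z) ≠ 0 := by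
              have hexp2 : g (x + t • z) (x + t • z) = (g x z + g z x) * t + g z z * t ^ 2 := by
                simp only [map_add, map_smul, LinearMap.add_apply, LinearMap.smul_apply,
                  smul_eq_mul]
                rw [hxx]; ring
              rw [hexp2]
              intro hc
              apply htτ
              have h7 : t * ((g x z + g z x) + g z z * t) = 0 := by linear_combination hc
              rcases mul_eq_zero.mp h7 with h8 | h8
              · exact absurd h8 ht0
              · field_simp
                linarith
            have h0 := key (x + t • z) hperp hgxt (hspan t htσ)
            have hexp : T n (x + t • z) (x + t • z) n
                = T n x x n + (T n x z n + T n z x n) * t + T n z z n * t ^ 2 := by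
              simp only [map_add, map_smul, LinearMap.add_apply, LinearMap.smul_apply,
                smul_eq_mul]
              ring
            rw [hexp] at h0
            exact h0
          exact (aux_quad hq).1
        by_cases hbad : ∃ pr : ℝ × ℝ, pr.2 • n = x + pr.1 • z
        · obtain ⟨⟨σ, aσ⟩, hσ⟩ := hbad
          refine fin σ ?_
          intro t htσ a ha
          apply hz2
          have hts : t - σ ≠ 0 := sub_ne_zero.mpr htσ
          have hz' : (t - σ) • z = (a - aσ) • n := by
            have h5 : (x + t • z) - (x + σ • z) = a • n - aσ • n := by rw [← ha, ← hσ]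
            rw [sub_smul, sub_smul]
            calc (t • z - σ • z : V) = (x + t • z) - (x + σ • z) := by abel
            _ = a • n - aσ • n := h5
          have hz'' : z = ((t - σ)⁻¹ * (a - aσ)) • n := by
            rw [mul_smul, ← hz', smul_smul, inv_mul_cancel₀ hts, one_smul]
          rw [hz'']
          simp only [map_smul, LinearMap.smul_apply, smul_eq_mul]
          rw [hn]; ring
        · push_neg at hbad
          exact fin 0 (fun t _ a => fun hc => hbad (t, a) hc)
  -- Part 3 : polarized version
  have part3 : ∀ n x y : V, g n n = 0 → n ≠ 0 → g n x = 0 → g n y = 0 → T n x y n = 0 := by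
    intro n x y hn hn0 hx hy
    have hxy := part2 n (x + y) hn hn0 (by rw [map_add, hx, hy]; ring)
    have hx' := part2 n x hn hn0 hx
    have hy' := part2 n y hn hn0 hy
    have hexp : T n (x + y) (x + y) n = T n x x n + T n x y n + T n y x n + T n y y n := by
      simp only [map_add, LinearMap.add_apply]
      ring
    have hsym2 := tmid n x y
    linarith
  -- Part 4 : cross term, nondegenerate case
  have crossW : ∀ n m q : V, g n n = 0 → n ≠ 0 → g m m = 0 → g n m = 1 →
      g n q = 0 → g m q = 0 → g q q ≠ 0 → T n m q n = 0 := by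
    intro n m q hn hn0 hm hnm hnq hmq hG
    have hmn : g m n = 1 := by rw [hsymm]; exact hnm
    have hqn : g q n = 0 := by rw [hsymm]; exact hnq
    have hqm : g q m = 0 := by rw [hsymm]; exact hmq
    have hkey : ∀ s : ℝ,
        ((1) * T n q q n) +
        ((-1) * g q q * T n m q n + (-1) * g q q * T n q m n + (1) * T n q q q + (1) * T q q q n) * s +
        ((-1/2) * g q q * T m q q n + (1) * (g q q) ^ 2 * T n m m n + (-1) * g q q * T n m q q + (-1) * g q q * T n q m q + (-1/2) * g q q * T n q q m + (-1) * g q q * T q m q n + (-1) * g q q * T q q m n + (1) * T q q q q) * s ^ 2 +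
        ((1/2) * (g q q) ^ 2 * T m m q n + (1/2) * (g q q) ^ 2 * T m q m n + (-1/2) * g q q * T m q q q + (1) * (g q q) ^ 2 * T n m m q + (1/2) * (g q q) ^ 2 * T n m q m + (1/2) * (g q q) ^ 2 * T n q m m + (1) * (g q q) ^ 2 * T q m m n + (-1) * g q q * T q m q q + (-1) * g q q * T q q m q + (-1/2) * g q q * T q q q m) * s ^ 3 +
        ((-1/2) * (g q q) ^ 3 * T m m m n + (1/2) * (g q q) ^ 2 * T m m q q + (1/2) * (g q q) ^ 2 * T m q m q + (1/4) * (g q q) ^ 2 * T m q q m + (-1/2) * (g q q) ^ 3 * T n m m m + (1) * (g q q) ^ 2 * T q m m q + (1/2) * (g q q) ^ 2 * T q m q m + (1/2) * (g q q) ^ 2 * T q q m m) * s ^ 4 +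
        ((-1/2) * (g q q) ^ 3 * T m m m q + (-1/4) * (g q q) ^ 3 * T m m q m + (-1/4) * (g q q) ^ 3 * T m q m m + (-1/2) * (g q q) ^ 3 * T q m m m) * s ^ 5 +
        ((1/4) * (g q q) ^ 4 * T m m m m) * s ^ 6 = 0 := by
      intro s
      have h1 : g (n + s • q + (-(g q q * s ^ 2) / 2) • m)
          (n + s • q + (-(g q q * s ^ 2) / 2) • m) = 0 := by
        simp only [map_add, map_smul, LinearMap.add_apply, LinearMap.smul_apply, smul_eq_mul]
        simp only [hn, hm, hnm, hmn, hnq, hqn, hmq, hqm]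
        ring
      have h2 : g (n + s • q + (-(g q q * s ^ 2) / 2) • m) (q - (s * g q q) • m) = 0 := by
        simp only [map_add, map_sub, map_smul, LinearMap.add_apply, LinearMap.sub_apply,
          LinearMap.smul_apply, smul_eq_mul]
        simp only [hn, hm, hnm, hmn, hnq, hqn, hmq, hqm]
        ring
      have h4 : g (n + s • q + (-(g q q * s ^ 2) / 2) • m) m = 1 := by
        simp only [map_add, map_smul, LinearMap.add_apply, LinearMap.smul_apply, smul_eq_mul]
        simp only [hm, hnm, hqm]
        ring
      have h3 : (n + s • q + (-(g q q * s ^ 2) / 2) • m) ≠ 0 := by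
        intro hzero; rw [hzero] at h4; simp at h4
      have h0 := part2 _ _ h1 h3 h2
      simp only [map_add, map_sub, map_smul, LinearMap.add_apply, LinearMap.sub_apply,
        LinearMap.smul_apply, smul_eq_mul] at h0
      linear_combination h0
    have hA1 := aux_poly6 hkey
    have z1 : T n q q q = 0 := tz2 n q q
    have z2 : T q q q n = 0 := tz1 q q n
    have hsw : T n q m n = T n m q n := tmid n m q
    have hfin : g q q * T n m q n = 0 := by
      linear_combination (-1/2 : ℝ) * hA1 + (1/2 : ℝ) * z1 + (1/2 : ℝ) * z2
        - (1/2 : ℝ) * (g q q) * hsw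
    rcases mul_eq_zero.mp hfin with h | h
    · exact absurd h hG
    · exact h
  -- Part 4' : cross term, general q
  have crossterm : ∀ n m q : V, g n n = 0 → n ≠ 0 → g m m = 0 → g n m = 1 →
      g n q = 0 → T n m q n = 0 := by
    intro n m q hn hn0 hm hnm hnq
    have hmn : g m n = 1 := by rw [hsymm]; exact hnm
    obtain ⟨q₀, hq₀def⟩ : ∃ X : V, X = q - (g m q) • n := ⟨_, rfl⟩
    have h1 : g n q₀ = 0 := by
      rw [hq₀def]
      simp only [map_sub, map_smul, smul_eq_mul]
      rw [hn, hnq]; ring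
    have h2 : g m q₀ = 0 := by
      rw [hq₀def]
      simp only [map_sub, map_smul, smul_eq_mul]
      rw [hmn]; ring
    have hred : T n m q₀ n = T n m q n := by
      rw [hq₀def]
      simp only [map_sub, map_smul, LinearMap.sub_apply, LinearMap.smul_apply, smul_eq_mul]
      rw [tz2 n m n]; ring
    rw [← hred]
    by_cases hQ : g q₀ q₀ = 0
    case neg => exact crossW n m q₀ hn hn0 hm hnm h1 h2 hQ
    case pos =>
      obtain ⟨z, hz1, hz2, hz3⟩ := Wex n m hn hm hnm
      have hq : ∀ t : ℝ, t ≠ 0 → t ≠ -((g q₀ z + g z q₀) / g z z) → t ≠ 0 →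
          T n m q₀ n + T n m z n * t + 0 * t ^ 2 = 0 := by
        intro t ht0 htτ _
        have hp1 : g n (q₀ + t • z) = 0 := by
          rw [map_add, map_smul, smul_eq_mul, h1, hz1]; ring
        have hp2 : g m (q₀ + t • z) = 0 := by
          rw [map_add, map_smul, smul_eq_mul, h2, hz2]; ring
        have hp3 : g (q₀ + t • z) (q₀ + t • z) ≠ 0 := by
          have hexp2 : g (q₀ + t • z) (q₀ + t • z) = (g q₀ z + g z q₀) * t + g z z * t ^ 2 := by
            simp only [map_add, map_smul, LinearMap.add_apply, LinearMap.smul_apply, smul_eq_mul]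
            rw [hQ]; ring
          rw [hexp2]
          intro hc
          apply htτ
          have h7 : t * ((g q₀ z + g z q₀) + g z z * t) = 0 := by linear_combination hc
          rcases mul_eq_zero.mp h7 with h8 | h8
          · exact absurd h8 ht0
          · field_simp
            linarith
        have h0 := crossW n m (q₀ + t • z) hn hn0 hm hnm hp1 hp2 hp3
        have hexp : T n m (q₀ + t • z) n = T n m q₀ n + T n m z n * t := by
          simp only [map_add, map_smul, LinearMap.add_apply, LinearMap.smul_apply, smul_eq_mul]
          ring
        rw [hexp] at h0
        linear_combination h0
      exact (aux_quad hq).1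
  -- Part 5a : full value on null planes
  have fullnull : ∀ n m : V, g n n = 0 → n ≠ 0 → g m m = 0 → g n m = 1 →
      ∀ x y : V, T n x y n = g n x * g n y * T n m m n := by
    intro n m hn hn0 hm hnm x y
    obtain ⟨x₀, hx₀def⟩ : ∃ X : V, X = x - (g n x) • m := ⟨_, rfl⟩
    obtain ⟨y₀, hy₀def⟩ : ∃ X : V, X = y - (g n y) • m := ⟨_, rfl⟩
    have hnx₀ : g n x₀ = 0 := by
      rw [hx₀def]; simp only [map_sub, map_smul, smul_eq_mul]; rw [hnm]; ring
    have hny₀ : g n y₀ = 0 := by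
      rw [hy₀def]; simp only [map_sub, map_smul, smul_eq_mul]; rw [hnm]; ring
    have c1 := part3 n x₀ y₀ hn hn0 hnx₀ hny₀
    have c2 := crossterm n m y₀ hn hn0 hm hnm hny₀
    have c3 := crossterm n m x₀ hn hn0 hm hnm hnx₀
    have c3' : T n x₀ m n = 0 := by rw [tmid n m x₀]; exact c3
    have hx' : x = x₀ + (g n x) • m := by rw [hx₀def]; abel
    have hy' : y = y₀ + (g n y) • m := by rw [hy₀def]; abel
    have hexp : T n (x₀ + (g n x) • m) (y₀ + (g n y) • m) n
        = T n x₀ y₀ n + g n y * T n x₀ m n + g n x * T n m y₀ n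
          + g n x * (g n y * T n m m n) := by
      simp only [map_add, map_smul, LinearMap.add_apply, LinearMap.smul_apply, smul_eq_mul]
      ring
    rw [← hx', ← hy'] at hexp
    linear_combination hexp + c1 + g n y * c3' + g n x * c2
  -- bridge between null directions
  have bridge : ∀ p q mp mq : V, g p p = 0 → p ≠ 0 → g mp mp = 0 → g p mp = 1 →
      g q q = 0 → q ≠ 0 → g mq mq = 0 → g q mq = 1 → g p q ≠ 0 →
      T p mp mp p = T q mq mq q := by
    intro p q mp mq hp hp0 hmp hpmp hq hq0 hmq hqmq hpq
    have h1 := fullnull p mp hp hp0 hmp hpmp q q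
    have h2 := fullnull q mq hq hq0 hmq hqmq p p
    have h3 := tpair p q q p
    have hgg : g q p = g p q := hsymm q p
    have h4 : (g p q * g p q) * (T p mp mp p - T q mq mq q) = 0 := by
      linear_combination h3 - h1 + h2 + ((g q p + g p q) * T q mq mq q) * hgg
    rcases mul_eq_zero.mp h4 with h | h
    · exact absurd h (mul_ne_zero hpq hpq)
    · linarith
  -- the universal constant
  have nullvalaux : ∀ n m : V, g n n = 0 → n ≠ 0 → g m m = 0 → g n m = 1 →
      T n m m n = T n₀ m₀ m₀ n₀ := by
    intro n m hn hn0 hm hnm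
    by_cases h1 : g n n₀ ≠ 0
    · exact bridge n n₀ m m₀ hn hn0 hm hnm hn₀n₀ hn₀ne hm₀m₀ hn₀m₀ h1
    push_neg at h1
    have hn₀n : g n₀ n = 0 := by rw [hsymm]; exact h1
    obtain ⟨α, hαdef⟩ : ∃ X : ℝ, X = g m₀ n := ⟨_, rfl⟩
    obtain ⟨w, hwdef⟩ : ∃ X : V, X = n - α • n₀ := ⟨_, rfl⟩
    have hw1 : g n₀ w = 0 := by
      rw [hwdef]; simp only [map_sub, map_smul, smul_eq_mul]
      rw [hn₀n₀, hn₀n]; ring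
    have hw2 : g m₀ w = 0 := by
      rw [hwdef]; simp only [map_sub, map_smul, smul_eq_mul]
      rw [hm₀n₀, hαdef]; ring
    have hww : g w w = 0 := by
      rw [hwdef]
      simp only [map_sub, map_smul, LinearMap.sub_apply, LinearMap.smul_apply, smul_eq_mul]
      rw [hn, hn₀n₀, hn₀n, hsymm n n₀, hn₀n]; ring
    have hn' : n = α • n₀ + w := by rw [hwdef]; abel
    by_cases hw0 : w = 0
    · -- n is proportional to n₀
      have hαn : n = α • n₀ := by rw [hn', hw0, add_zero]
      have hα0 : α ≠ 0 := by
        intro h; apply hn0; rw [hαn, h, zero_smul]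
      have h2 : g n m₀ = α := by
        rw [hαn]; simp only [map_smul, LinearMap.smul_apply, smul_eq_mul]
        rw [hn₀m₀]; ring
      have h3 : g n m₀ ≠ 0 := by rw [h2]; exact hα0
      have b1 := bridge n m₀ m n₀ hn hn0 hm hnm hm₀m₀ hm₀ne hn₀n₀ hm₀n₀ h3
      rw [b1]
      exact tpair m₀ n₀ n₀ m₀
    · -- w ≠ 0 : build an intermediate null vector
      obtain ⟨u, hu1, hu2, hu3⟩ : ∃ u : V, g n₀ u = 0 ∧ g m₀ u = 0 ∧ g w u ≠ 0 := by
        obtain ⟨v, hv⟩ := hexv w hw0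
        have hwn₀ : g w n₀ = 0 := by rw [hsymm]; exact hw1
        have hwm₀ : g w m₀ = 0 := by rw [hsymm]; exact hw2
        refine ⟨v - (g m₀ v) • n₀ - (g n₀ v) • m₀, ?_, ?_, ?_⟩
        · simp only [map_sub, map_smul, smul_eq_mul]
          rw [hn₀n₀, hn₀m₀]; ring
        · simp only [map_sub, map_smul, smul_eq_mul]
          rw [hm₀m₀, hm₀n₀]; ring
        · simp only [map_sub, map_smul, smul_eq_mul]
          rw [hwn₀, hwm₀]
          simpa using hv
      obtain ⟨u', hu'def⟩ : ∃ X : V, X = (g w u)⁻¹ • u := ⟨_, rfl⟩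
      have hwu' : g w u' = 1 := by
        rw [hu'def, map_smul, smul_eq_mul, inv_mul_cancel₀ hu3]
      have hn₀u' : g n₀ u' = 0 := by rw [hu'def, map_smul, smul_eq_mul, hu1]; ring
      have hm₀u' : g m₀ u' = 0 := by rw [hu'def, map_smul, smul_eq_mul, hu2]; ring
      obtain ⟨u₀, hu₀def⟩ : ∃ X : V, X = u' - (g u' u' / 2) • w := ⟨_, rfl⟩
      have hn₀u₀ : g n₀ u₀ = 0 := by
        rw [hu₀def, map_sub, map_smul, smul_eq_mul, hn₀u', hw1]; ring
      have hm₀u₀ : g m₀ u₀ = 0 := by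
        rw [hu₀def, map_sub, map_smul, smul_eq_mul, hm₀u', hw2]; ring
      have hu₀u₀ : g u₀ u₀ = 0 := by
        rw [hu₀def]
        simp only [map_sub, map_smul, LinearMap.sub_apply, LinearMap.smul_apply, smul_eq_mul]
        rw [hww, hwu', hsymm u' w, hwu']; ring
      have hwu₀ : g w u₀ = 1 := by
        rw [hu₀def, map_sub, map_smul, smul_eq_mul, hwu', hww]; ring
      obtain ⟨ε, hεdef⟩ : ∃ X : ℝ, X = if α = -1 then (-1 : ℝ) else 1 := ⟨_, rfl⟩
      obtain ⟨qq, hqqdef⟩ : ∃ X : V, X = m₀ + ε • u₀ := ⟨_, rfl⟩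
      have hqqnull : g qq qq = 0 := by
        rw [hqqdef]
        simp only [map_add, map_smul, LinearMap.add_apply, LinearMap.smul_apply, smul_eq_mul]
        rw [hm₀m₀, hm₀u₀, hsymm u₀ m₀, hm₀u₀, hu₀u₀]; ring
      have hn₀qq : g n₀ qq = 1 := by
        rw [hqqdef, map_add, map_smul, smul_eq_mul, hn₀m₀, hn₀u₀]; ring
      have hqqn₀ : g qq n₀ = 1 := by rw [hsymm]; exact hn₀qq
      have hqq0 : qq ≠ 0 := by
        intro h; rw [h] at hn₀qq; simp at hn₀qq
      have hnqq : g n qq = α + ε := by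
        rw [hn']
        simp only [map_add, map_smul, LinearMap.add_apply, LinearMap.smul_apply, smul_eq_mul]
        rw [hn₀qq, hqqdef, map_add, map_smul, smul_eq_mul]
        rw [hsymm w m₀, hw2, hwu₀]; ring
      have hne : α + ε ≠ 0 := by
        rw [hεdef]
        by_cases hα1 : α = -1
        · rw [if_pos hα1, hα1]; norm_num
        · rw [if_neg hα1]
          intro hc; apply hα1; linarith
      have hnqq0 : g n qq ≠ 0 := by rw [hnqq]; exact hne
      have b1 := bridge n qq m n₀ hn hn0 hm hnm hqqnull hqq0 hn₀n₀ hqqn₀ hnqq0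
      have b2 := bridge qq n₀ n₀ m₀ hqqnull hqq0 hn₀n₀ hqqn₀ hn₀n₀ hn₀ne hm₀m₀ hn₀m₀
        (by rw [hqqn₀]; norm_num)
      rw [b1, b2]
  have nullval : ∀ n : V, g n n = 0 → ∀ x y : V,
      T n x y n = T n₀ m₀ m₀ n₀ * (g n x * g n y) := by
    intro n hn x y
    by_cases hn0 : n = 0
    · rw [hn0]; simp
    · obtain ⟨m, hm, hnm⟩ := mkpair n hn hn0
      rw [fullnull n m hn hn0 hm hnm x y, nullvalaux n m hn hn0 hm hnm]; ring
  obtain ⟨c₀, hc₀⟩ : ∃ X : ℝ, X = T n₀ m₀ m₀ n₀ := ⟨_, rfl⟩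
  have nullval' : ∀ n : V, g n n = 0 → ∀ x y : V, T n x y n = c₀ * (g n x * g n y) := by
    intro n hn x y; rw [hc₀]; exact nullval n hn x y
  -- the cone lemma
  have cone : ∀ x y v : V, 2 * T v x y v = 2 * c₀ * (g v y * g v x)
      + g v v * (T n₀ x y m₀ + T m₀ x y n₀ - c₀ * (g m₀ y * g n₀ x + g n₀ y * g m₀ x)) := by
    intro x y v
    obtain ⟨a, hadef⟩ : ∃ X : ℝ, X = g m₀ v := ⟨_, rfl⟩
    obtain ⟨b, hbdef⟩ : ∃ X : ℝ, X = g n₀ v := ⟨_, rfl⟩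
    obtain ⟨w, hwdef⟩ : ∃ X : V, X = v - a • n₀ - b • m₀ := ⟨_, rfl⟩
    have hv : v = a • n₀ + b • m₀ + w := by rw [hwdef]; abel
    have hn₀w : g n₀ w = 0 := by
      rw [hwdef]
      simp only [map_sub, map_smul, smul_eq_mul]
      rw [hn₀n₀, hn₀m₀, ← hbdef]; ring
    have hm₀w : g m₀ w = 0 := by
      rw [hwdef]
      simp only [map_sub, map_smul, smul_eq_mul]
      rw [hm₀n₀, hm₀m₀, ← hadef]; ring
    have hwn₀ : g w n₀ = 0 := by rw [hsymm]; exact hn₀w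
    have hwm₀ : g w m₀ = 0 := by rw [hsymm]; exact hm₀w
    have hgvv : g v v = 2 * a * b + g w w := by
      have h9 : g (a • n₀ + b • m₀ + w) (a • n₀ + b • m₀ + w) = 2 * a * b + g w w := by
        simp only [map_add, map_smul, LinearMap.add_apply, LinearMap.smul_apply, smul_eq_mul,
          hn₀n₀, hn₀m₀, hm₀n₀, hm₀m₀, hn₀w, hm₀w, hwn₀, hwm₀]
        ring
      rw [← hv] at h9
      exact h9
    have hD0 := nullval' m₀ hm₀m₀ x y
    have hD4 := nullval' n₀ hn₀n₀ x y
    have hkey : ∀ t : ℝ,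
        ((1) * (g w w) * (g w w) * (T m₀ x y m₀) + (-1) * (g w w) * (g w w) * (c₀) * (g m₀ x) * (g m₀ y)) +
        ((-2) * (g w w) * (T m₀ x y w) + (-2) * (g w w) * (T w x y m₀) + (2) * (g w w) * (c₀) * (g m₀ x) * (g w y) + (2) * (g w w) * (c₀) * (g m₀ y) * (g w x)) * t +
        ((-2) * (g w w) * (T m₀ x y n₀) + (-2) * (g w w) * (T n₀ x y m₀) + (4) * (T w x y w) + (2) * (g w w) * (c₀) * (g m₀ x) * (g n₀ y) + (2) * (g w w) * (c₀) * (g m₀ y) * (g n₀ x) + (-4) * (c₀) * (g w x) * (g w y)) * t ^ 2 +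
        ((4) * (T n₀ x y w) + (4) * (T w x y n₀) + (-4) * (c₀) * (g n₀ x) * (g w y) + (-4) * (c₀) * (g n₀ y) * (g w x)) * t ^ 3 +
        ((4) * (T n₀ x y n₀) + (-4) * (c₀) * (g n₀ x) * (g n₀ y)) * t ^ 4 = 0 := by
      intro t
      have hμnull : g ((2 * t ^ 2) • n₀ + (-(g w w)) • m₀ + (2 * t) • w)
          ((2 * t ^ 2) • n₀ + (-(g w w)) • m₀ + (2 * t) • w) = 0 := by
        simp only [map_add, map_smul, LinearMap.add_apply, LinearMap.smul_apply, smul_eq_mul,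
          hn₀n₀, hn₀m₀, hm₀n₀, hm₀m₀, hn₀w, hm₀w, hwn₀, hwm₀]
        ring
      have h := nullval' _ hμnull x y
      simp only [map_add, map_smul, LinearMap.add_apply, LinearMap.smul_apply,
        smul_eq_mul] at h
      linear_combination h
    obtain ⟨hB1, hB2, hB3⟩ := aux_poly4 hkey
    have hD1 : T m₀ x y w + T w x y m₀ - c₀ * (g m₀ x * g w y) - c₀ * (g m₀ y * g w x) = 0 := by
      by_cases hG : g w w = 0
      · have hkey2 : ∀ t : ℝ,
            ((1) * (T m₀ x y m₀) + (-1) * (c₀) * (g m₀ x) * (g m₀ y)) +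
          ((1) * (T m₀ x y w) + (1) * (T w x y m₀) + (-1) * (c₀) * (g m₀ x) * (g w y) + (-1) * (c₀) * (g m₀ y) * (g w x)) * t +
          ((1) * (T w x y w) + (-1) * (c₀) * (g w x) * (g w y)) * t ^ 2 +
          (0) * t ^ 3 +
          (0) * t ^ 4 = 0 := by
          intro t
          have hνnull : g (m₀ + t • w) (m₀ + t • w) = 0 := by
            simp only [map_add, map_smul, LinearMap.add_apply, LinearMap.smul_apply, smul_eq_mul,
              hm₀m₀, hm₀w, hwm₀]
            rw [hG]; ring
          have h := nullval' _ hνnull x y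
          simp only [map_add, map_smul, LinearMap.add_apply, LinearMap.smul_apply,
            smul_eq_mul] at h
          linear_combination h
        have h1 := (aux_poly4 hkey2).1
        linear_combination h1
      · have h2 : g w w * (2 * (T m₀ x y w + T w x y m₀ - c₀ * (g m₀ x * g w y)
            - c₀ * (g m₀ y * g w x))) = 0 := by linear_combination (-1 : ℝ) * hB1
        have h3 := (mul_eq_zero.mp h2).resolve_left hG
        linarith
    have main : 2 * T (a • n₀ + b • m₀ + w) x y (a • n₀ + b • m₀ + w)
        = 2 * c₀ * (g (a • n₀ + b • m₀ + w) y * g (a • n₀ + b • m₀ + w) x)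
          + (2 * a * b + g w w)
            * (T n₀ x y m₀ + T m₀ x y n₀ - c₀ * (g m₀ y * g n₀ x + g n₀ y * g m₀ x)) := by
      simp only [map_add, map_smul, LinearMap.add_apply, LinearMap.smul_apply, smul_eq_mul]
      linear_combination 2 * b ^ 2 * hD0 + 2 * a ^ 2 * hD4 + 2 * b * hD1
        + (a / 2) * hB3 + (1 / 2 : ℝ) * hB2
    rw [← hv] at main
    rw [hgvv]
    exact main
  -- the bracket vanishes
  have hLaux : ∀ x y : V, g x x ≠ 0 → 2 * c₀ * g x y + (T n₀ x y m₀ + T m₀ x y n₀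
      - c₀ * (g m₀ y * g n₀ x + g n₀ y * g m₀ x)) = 0 := by
    intro x y hxx
    have hc := cone x y x
    have h0 : T x x y x = 0 := tz1 x y x
    have h5 : g x x * (2 * c₀ * g x y + (T n₀ x y m₀ + T m₀ x y n₀
        - c₀ * (g m₀ y * g n₀ x + g n₀ y * g m₀ x))) = 0 := by
      linear_combination 2 * h0 - hc
    exact (mul_eq_zero.mp h5).resolve_left hxx
  have hLam : ∀ x y : V, 2 * c₀ * g x y + (T n₀ x y m₀ + T m₀ x y n₀
      - c₀ * (g m₀ y * g n₀ x + g n₀ y * g m₀ x)) = 0 := by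
    intro x y
    obtain ⟨M, hMdef⟩ : ∃ X : ℝ, X = |g x x| + |g x e| + |g e x| + 1 := ⟨_, rfl⟩
    have hM1 : (1 : ℝ) ≤ M := by
      rw [hMdef]
      have := abs_nonneg (g x x); have := abs_nonneg (g x e); have := abs_nonneg (g e x)
      linarith
    have hgood : ∀ t : ℝ, M ≤ t → g (x + t • e) (x + t • e) ≠ 0 := by
      intro t ht hc
      simp only [map_add, map_smul, LinearMap.add_apply, LinearMap.smul_apply, smul_eq_mul,
        hee] at hc
      rw [hMdef] at ht
      nlinarith [le_abs_self (g x x), neg_abs_le (g x x), le_abs_self (g x e),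
        neg_abs_le (g x e), le_abs_self (g e x), neg_abs_le (g e x),
        abs_nonneg (g x x), abs_nonneg (g x e), abs_nonneg (g e x)]
    have key1 := hLaux (x + M • e) y (hgood M le_rfl)
    have key2 := hLaux (x + (M + 1) • e) y (hgood (M + 1) (by linarith))
    simp only [map_add, map_smul, LinearMap.add_apply, LinearMap.smul_apply,
      smul_eq_mul] at key1 key2
    linear_combination (M + 1) * key1 - M * key2
  -- all sectional-type values
  have hsec : ∀ x y v : V, T v x y v = c₀ * (g v y * g v x) - c₀ * (g v v * g x y) := by
    intro x y v
    linear_combination (1 / 2 : ℝ) * cone x y v + (g v v / 2) * hLam x y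
  have hpol : ∀ x y z u : V, T z x y u + T u x y z
      = c₀ * (g z y * g u x + g u y * g z x) - c₀ * ((g z u + g u z) * g x y) := by
    intro x y z u
    have h1 := hsec x y (z + u); have h2 := hsec x y z; have h3 := hsec x y u
    simp only [map_add, LinearMap.add_apply] at h1
    linear_combination h1 - h2 - h3
  -- final polarization
  set Sf : V → V → V → V → ℝ :=
    fun z u v w => T z u v w + c₀ * (g z w * g u v - g z v * g u w) with hSf
  have sS3 : ∀ z u v w : V, Sf z u v w = -Sf z u w v := by
    intro z u v w; simp only [hSf]; linear_combination hT3 z u v w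
  have sSpair : ∀ z u v w : V, Sf z u v w = Sf v w z u := by
    intro z u v w; simp only [hSf]
    linear_combination tpair z u v w + c₀ * g z w * hsymm u v + c₀ * g v u * hsymm z w
      - c₀ * g z v * hsymm u w - c₀ * g w u * hsymm z v
  have sSB : ∀ z u v w : V, Sf z u v w + Sf u v z w + Sf v z u w = 0 := by
    intro z u v w; simp only [hSf]
    linear_combination hT2 z u v w + c₀ * g z w * hsymm u v + c₀ * g u w * hsymm v z
      + c₀ * g v w * hsymm z u
  have sSN : ∀ x y z u : V, Sf z x y u + Sf u x y z = 0 := by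
    intro x y z u; simp only [hSf]
    linear_combination hpol x y z u + c₀ * g z y * hsymm u x + c₀ * g u y * hsymm z x
  have hS0 : ∀ x y z u : V, Sf x y z u = 0 := by
    intro x y z u
    have hB := sSB x y z u
    have a1 := sSpair y z x u
    have a2 := sSN u y x z
    have a3 := sS3 z u x y
    have a4 := sSpair x y z u
    have b1 := sSpair z x y u
    have b2 := sSN u z y x
    have b3 := sS3 x u y z
    linarith
  refine ⟨-c₀, ?_⟩
  intro z u v w
  have hfin := hS0 z u v w
  simp only [hSf] at hfin
  linear_combination hfin
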